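/- Let G be a weighted undirected graph partitioned into G_1, ..., G_k. Form the augmented subgraph G'_i by adding, for each pair of boundary vertices b_1, b_2 ∈ B_i, an edge of weight d_G(b_1, b_2) (the global shortest distance in G). Then for all s, t ∈ G_i (boundary or not), d_{G'_i}(s, t) = d_G(s, t). -/

import Mathlib

open scoped ENNReal Classical

namespace PSP

/-- A weighted undirected graph: symmetric adjacency and a weight function
with values in `ℝ≥0∞` (so weights are non-negative). -/
structure WGraph (V : Type*) where
  Adj : V → V → Prop
  symm : ∀ {u v}, Adj u v → Adj v u
  w : V → V → ℝ≥0∞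

variable {V : Type*} {ι : Type*}

/-- Sum of `f` over consecutive pairs of a list. -/
noncomputable def pairSum (f : V → V → ℝ≥0∞) : List V → ℝ≥0∞
  | a :: b :: rest => f a b + pairSum f (b :: rest)
  | _ => 0

/-- Weighted length of a walk (given as a list of vertices). -/
noncomputable def wlen (G : WGraph V) (l : List V) : ℝ≥0∞ := pairSum G.w l

/-- `l` is a walk in `G` from `s` to `t`: consecutive vertices are adjacent,
the first vertex is `s` and the last is `t`. -/
def IsWalk (G : WGraph V) (s t : V) (l : List V) : Prop :=
  l.Chain' G.Adj ∧ l.head? = some s ∧ l.getLast? = some t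

/-- Shortest-path distance in `G` (`⊤` if no walk exists). -/
noncomputable def dist (G : WGraph V) (s t : V) : ℝ≥0∞ :=
  sInf {x | ∃ l, IsWalk G s t l ∧ wlen G l = x}

/-- Induced subgraph on a vertex set `S`. -/
def induce (G : WGraph V) (S : Set V) : WGraph V where
  Adj u v := G.Adj u v ∧ u ∈ S ∧ v ∈ S
  symm h := ⟨G.symm h.1, h.2.2, h.2.1⟩
  w := G.w

/-- A partition of the vertex set is given by a function `P : V → ι`
assigning each vertex its partition index. The set of all boundary
vertices: vertices having a neighbor in another partition. -/
def bdry (G : WGraph V) (P : V → ι) : Set V :=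
  {v | ∃ u, G.Adj v u ∧ P u ≠ P v}

/-- Boundary vertices of partition `i`. -/
def bdryIn (G : WGraph V) (P : V → ι) (i : ι) : Set V :=
  {v | P v = i ∧ ∃ u, G.Adj v u ∧ P u ≠ i}

/-- The induced subgraph `G_i` of partition `i`. -/
def partGraph (G : WGraph V) (P : V → ι) (i : ι) : WGraph V :=
  induce G {x | P x = i}

/-- The No-Boundary overlay graph `G̃`: vertices are boundary vertices; for each
partition, each boundary pair gets an edge of weight equal to the *local*
partition distance; inter-partition edges of `G` keep their original weight. -/
noncomputable def overlay (G : WGraph V) (P : V → ι) : WGraph V where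
  Adj u v := (P u = P v ∧ u ∈ bdry G P ∧ v ∈ bdry G P) ∨ (P u ≠ P v ∧ G.Adj u v)
  symm := by
    rintro u v (⟨h1, h2, h3⟩ | ⟨h1, h2⟩)
    · exact Or.inl ⟨h1.symm, h3, h2⟩
    · exact Or.inr ⟨fun h => h1 h.symm, G.symm h2⟩
  w u v := if P u = P v then dist (partGraph G P (P u)) u v else G.w u v

/-- A half-connected boundary vertex: has a non-boundary neighbor in its own partition. -/
def halfC (G : WGraph V) (P : V → ι) (b : V) : Prop :=
  b ∈ bdry G P ∧ ∃ u, G.Adj b u ∧ P u = P b ∧ u ∉ bdry G P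

/-- A full-connected boundary vertex: all in-partition neighbors are boundary vertices. -/
def fullC (G : WGraph V) (P : V → ι) (b : V) : Prop :=
  b ∈ bdry G P ∧ ∀ u, G.Adj b u → P u = P b → u ∈ bdry G P

/-- The pruned overlay graph `G̃'`, with inserted boundary-pair weights `ω`:
edges among half-connected boundary pairs of the same partition (weight `ω`),
all inter-partition edges, and the original in-partition adjacent edges of
full-connected boundary vertices. -/
noncomputable def pruned (G : WGraph V) (P : V → ι) (ω : V → V → ℝ≥0∞) : WGraph V where
  Adj u v :=
    (P u = P v ∧ halfC G P u ∧ halfC G P v) ∨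
    (P u ≠ P v ∧ G.Adj u v) ∨
    (P u = P v ∧ G.Adj u v ∧ u ∈ bdry G P ∧ v ∈ bdry G P ∧ (fullC G P u ∨ fullC G P v))
  symm := by
    rintro u v (⟨h1, h2, h3⟩ | ⟨h1, h2⟩ | ⟨h1, h2, h3, h4, h5⟩)
    · exact Or.inl ⟨h1.symm, h3, h2⟩
    · exact Or.inr (Or.inl ⟨fun h => h1 h.symm, G.symm h2⟩)
    · exact Or.inr (Or.inr ⟨h1.symm, G.symm h2, h4, h3, h5.symm⟩)
  w u v := if P u = P v ∧ halfC G P u ∧ halfC G P v then ω u v else G.w u v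

/-- The augmented partition graph `G'_i`: the induced subgraph `G_i` plus, for each
boundary pair `b₁ b₂ ∈ B_i`, an inserted edge of weight `ω b₁ b₂` (taking the
minimum with an already-existing edge weight). -/
noncomputable def augment (G : WGraph V) (P : V → ι) (i : ι) (ω : V → V → ℝ≥0∞) : WGraph V where
  Adj u v := (G.Adj u v ∧ P u = i ∧ P v = i) ∨ (u ∈ bdryIn G P i ∧ v ∈ bdryIn G P i)
  symm := by
    rintro u v (⟨h1, h2, h3⟩ | ⟨h1, h2⟩)
    · exact Or.inl ⟨G.symm h1, h3, h2⟩
    · exact Or.inr ⟨h2, h1⟩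
  w u v :=
    if u ∈ bdryIn G P i ∧ v ∈ bdryIn G P i then
      (if G.Adj u v ∧ P u = i ∧ P v = i then min (ω u v) (G.w u v) else ω u v)
    else G.w u v

/-- Graph obtained from `G` by adding, for every pair `u v ∈ S`, a shortcut edge
of weight `dist G u v` (taking the minimum with an already-existing edge weight). -/
noncomputable def shortcut (G : WGraph V) (S : Set V) : WGraph V where
  Adj u v := G.Adj u v ∨ (u ∈ S ∧ v ∈ S)
  symm := by
    rintro u v (h | ⟨h1, h2⟩)
    · exact Or.inl (G.symm h)
    · exact Or.inr ⟨h2, h1⟩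
  w u v :=
    if u ∈ S ∧ v ∈ S then
      (if G.Adj u v then min (dist G u v) (G.w u v) else dist G u v)
    else G.w u v

/-- Vertex-splitting construction: each cut vertex `x ∈ X` keeps its neighbors in
group `N x 0`; for `1 ≤ i ≤ l x` a duplicate `(x, i)` is created, connected to the
vertices of `N x i` with the original weights and to `x` by a zero-weight edge. -/
noncomputable def split (G : WGraph V) (X : Set V) (N : V → ℕ → Set V) (l : V → ℕ) :
    WGraph (V ⊕ V × ℕ) where
  Adj a b := match a, b with
    | .inl u, .inl v => G.Adj u v ∧ (u ∈ X → v ∈ N u 0) ∧ (v ∈ X → u ∈ N v 0)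
    | .inl v, .inr (x, i) => x ∈ X ∧ 1 ≤ i ∧ i ≤ l x ∧ ((G.Adj x v ∧ v ∈ N x i) ∨ v = x)
    | .inr (x, i), .inl v => x ∈ X ∧ 1 ≤ i ∧ i ≤ l x ∧ ((G.Adj x v ∧ v ∈ N x i) ∨ v = x)
    | .inr _, .inr _ => False
  symm := by
    rintro (u | ⟨x, i⟩) (v | ⟨y, j⟩) h
    · exact ⟨G.symm h.1, h.2.2, h.2.1⟩
    · exact h
    · exact h
    · exact h.elim
  w a b := match a, b with
    | .inl u, .inl v => G.w u v
    | .inl v, .inr (x, _) => if v = x then 0 else G.w x v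
    | .inr (x, _), .inl v => if v = x then 0 else G.w x v
    | .inr _, .inr _ => 0


/-! ### Auxiliary lemmas -/

lemma pairSum_append_cons (f : V → V → ℝ≥0∞) :
    ∀ (A : List V) (v : V) (B : List V),
      pairSum f (A ++ v :: B) = pairSum f (A ++ [v]) + pairSum f (v :: B)
  | [], v, B => by simp [pairSum]
  | [a], v, B => by simp [pairSum]
  | a :: a' :: A, v, B => by
    have h := pairSum_append_cons f (a' :: A) v B
    simp only [List.cons_append] at *
    rw [show pairSum f (a :: a' :: (A ++ v :: B)) = f a a' + pairSum f (a' :: (A ++ v :: B))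
        from rfl,
      show pairSum f (a :: a' :: (A ++ [v])) = f a a' + pairSum f (a' :: (A ++ [v])) from rfl,
      h, add_assoc]

lemma dist_le_wlen (G : WGraph V) {s t : V} {l : List V} (h : IsWalk G s t l) :
    dist G s t ≤ wlen G l :=
  sInf_le ⟨l, h, rfl⟩

lemma isWalk_single (G : WGraph V) (s : V) : IsWalk G s s [s] :=
  ⟨List.isChain_singleton s, rfl, rfl⟩

lemma isWalk_pair (G : WGraph V) {u v : V} (h : G.Adj u v) : IsWalk G u v [u, v] :=
  ⟨List.isChain_cons_cons.mpr ⟨h, List.isChain_singleton v⟩, rfl, rfl⟩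

lemma wlen_pair (G : WGraph V) (u v : V) : wlen G [u, v] = G.w u v := by
  show G.w u v + pairSum G.w [v] = G.w u v
  show G.w u v + 0 = G.w u v
  rw [add_zero]

lemma dist_self_le (G : WGraph V) (s : V) : dist G s s ≤ 0 :=
  dist_le_wlen G (isWalk_single G s)

lemma dist_le_w (G : WGraph V) {u v : V} (h : G.Adj u v) : dist G u v ≤ G.w u v :=
  (dist_le_wlen G (isWalk_pair G h)).trans_eq (wlen_pair G u v)

lemma dist_eq_iInf (G : WGraph V) (s t : V) :
    dist G s t = ⨅ p : {l : List V // IsWalk G s t l}, wlen G p.1 := by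
  rw [dist]
  have : {x | ∃ l, IsWalk G s t l ∧ wlen G l = x} =
      Set.range (fun p : {l : List V // IsWalk G s t l} => wlen G p.1) := by
    ext x
    constructor
    · rintro ⟨l, hl, rfl⟩; exact ⟨⟨l, hl⟩, rfl⟩
    · rintro ⟨⟨l, hl⟩, rfl⟩; exact ⟨l, hl, rfl⟩
  rw [this, sInf_range]

lemma isWalk_concat (G : WGraph V) {a b c : V} {l₁ l₂ : List V}
    (h₁ : IsWalk G a b l₁) (h₂ : IsWalk G b c l₂) :
    IsWalk G a c (l₁.dropLast ++ l₂) ∧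
      wlen G (l₁.dropLast ++ l₂) = wlen G l₁ + wlen G l₂ := by
  obtain ⟨hc₁, hh₁, hl₁⟩ := h₁
  obtain ⟨hc₂, hh₂, hl₂⟩ := h₂
  have hdc : l₁.dropLast ++ [b] = l₁ := List.dropLast_append_getLast? b hl₁
  obtain ⟨l₂', rfl⟩ : ∃ l₂', l₂ = b :: l₂' := by
    cases l₂ with
    | nil => simp at hh₂
    | cons v l₂' =>
      have hvb : v = b := by simpa using hh₂
      exact ⟨l₂', by rw [hvb]⟩
  constructor
  · refine ⟨?_, ?_, ?_⟩
    · show List.IsChain _ _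
      rw [List.isChain_append]
      change List.IsChain _ _ at hc₁
      rw [← hdc, List.isChain_append] at hc₁
      refine ⟨hc₁.1, hc₂, fun x hx y hy => ?_⟩
      have hyb : b = y := by simpa using hy
      subst hyb
      exact hc₁.2.2 x hx b (by simp)
    · cases hA : l₁.dropLast with
      | nil =>
        have : l₁ = [b] := by rw [← hdc, hA]; rfl
        rw [this] at hh₁
        have : a = b := by simpa using hh₁.symm
        simpa [hA] using this.symm
      | cons x A' =>
        have : l₁.head? = some x := by
          rw [← hdc, hA]; rfl
        rw [hh₁] at this
        have hax : a = x := by simpa using this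
        simp [hA, ← hax]
    · rw [List.getLast?_append, hl₂]; rfl
  · simp only [wlen]
    rw [pairSum_append_cons G.w l₁.dropLast b l₂', hdc]

lemma dist_triangle (G : WGraph V) (a b c : V) :
    dist G a c ≤ dist G a b + dist G b c := by
  rw [dist_eq_iInf G a b, dist_eq_iInf G b c, ENNReal.iInf_add]
  refine le_iInf fun p₁ => ?_
  rw [ENNReal.add_iInf]
  refine le_iInf fun p₂ => ?_
  obtain ⟨hw, hlen⟩ := isWalk_concat G p₁.2 p₂.2
  exact (dist_le_wlen G hw).trans_eq hlen

lemma dist_le_of_edge_le {G H : WGraph V}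
    (h : ∀ u v, H.Adj u v → dist G u v ≤ H.w u v) (s t : V) :
    dist G s t ≤ dist H s t := by
  have key : ∀ (l : List V) (s : V), IsWalk H s t l → dist G s t ≤ wlen H l := by
    intro l
    induction l with
    | nil => intro s hw; simp [IsWalk] at hw
    | cons a l ih =>
      intro s hw
      obtain ⟨hc, hh, hl⟩ := hw
      have hsa : a = s := (by simpa using hh : a = s)
      subst hsa
      cases l with
      | nil =>
        have hta : a = t := by simpa using hl
        subst hta
        calc dist G a a ≤ 0 := dist_self_le G a
          _ ≤ wlen H [a] := zero_le
      | cons b l' =>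
        have hab := List.isChain_cons_cons.mp hc
        have hwalk : IsWalk H b t (b :: l') := ⟨hab.2, rfl, by simpa using hl⟩
        calc dist G a t ≤ dist G a b + dist G b t := dist_triangle G a b t
          _ ≤ H.w a b + wlen H (b :: l') := add_le_add (h a b hab.1) (ih b hwalk)
          _ = wlen H (a :: b :: l') := rfl
  rw [dist_eq_iInf H s t]
  exact le_iInf fun p => key p.1 s p.2

lemma augment_w_le_w (G : WGraph V) (P : V → ι) (i : ι) (ω : V → V → ℝ≥0∞)
    {u v : V} (h : G.Adj u v) :
    (augment G P i ω).w u v ≤ min (ω u v) (G.w u v) ∨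
      (augment G P i ω).w u v = G.w u v := by
  show (if _ then _ else _) ≤ _ ∨ (if _ then _ else _) = _
  split_ifs with h1 h2
  · exact Or.inl le_rfl
  · exact (h2 ⟨h, h1.1.1, h1.2.1⟩).elim
  · exact Or.inr rfl

/-- Key lemma: the augmented graph distance is at most the weight of any `G`-walk
between two vertices of partition `i`. -/
lemma augment_dist_le (G : WGraph V) (P : V → ι) (i : ι) (t : V) (ht : P t = i) :
    ∀ (n : ℕ) (s : V) (l : List V), l.length ≤ n → IsWalk G s t l → P s = i →
      dist (augment G P i (dist G)) s t ≤ wlen G l := by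
  intro n
  induction n with
  | zero =>
    intro s l hlen hw _
    have : l = [] := List.length_eq_zero_iff.mp (Nat.le_zero.mp hlen)
    subst this
    simp [IsWalk] at hw
  | succ n ih =>
    intro s l hlen hw hs
    obtain ⟨hc, hh, hl⟩ := hw
    cases l with
    | nil => simp at hh
    | cons a l' =>
      have hsa : a = s := (by simpa using hh : a = s)
      subst hsa
      cases l' with
      | nil =>
        have hta : a = t := by simpa using hl
        subst hta
        calc dist (augment G P i (dist G)) a a ≤ 0 := dist_self_le _ a
          _ ≤ wlen G [a] := zero_le
      | cons m rest =>
        have hadj : G.Adj a m := (List.isChain_cons_cons.mp hc).1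
        have hc2 : (m :: rest).Chain' G.Adj := (List.isChain_cons_cons.mp hc).2
        have hl2 : (m :: rest).getLast? = some t := by simpa using hl
        have hlen2 : (m :: rest).length ≤ n := by
          simp only [List.length_cons] at hlen ⊢; omega
        set G' := augment G P i (dist G) with hG'
        by_cases hm : P m = i
        · -- the next vertex stays in the partition: use the original edge
          have hAdj' : G'.Adj a m := Or.inl ⟨hadj, hs, hm⟩
          have hw' : G'.w a m ≤ G.w a m := by
            rcases augment_w_le_w G P i (dist G) hadj with h | h
            · exact h.trans (min_le_right _ _)
            · exact h.le
          calc dist G' a t ≤ dist G' a m + dist G' m t := dist_triangle G' a m t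
            _ ≤ G.w a m + wlen G (m :: rest) := by
                refine add_le_add ((dist_le_w G' hAdj').trans hw') ?_
                exact ih m (m :: rest) hlen2 ⟨hc2, rfl, hl2⟩ hm
            _ = wlen G (a :: m :: rest) := rfl
        · -- the walk leaves the partition: shortcut to the first return
          have hsB : a ∈ bdryIn G P i := ⟨hs, m, hadj, hm⟩
          set p : V → Bool := fun x => decide (P x ≠ i) with hp
          set pre := (m :: rest).takeWhile p with hpre
          set suf := (m :: rest).dropWhile p with hsuf
          have hsplit : pre ++ suf = m :: rest := List.takeWhile_append_dropWhile
          have htmem : t ∈ m :: rest := by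
            obtain ⟨hne, heq⟩ := List.mem_getLast?_eq_getLast hl2
            exact heq ▸ List.getLast_mem hne
          have hsufne : suf ≠ [] := by
            intro h
            rw [h, List.append_nil] at hsplit
            have := List.mem_takeWhile_imp (hpre ▸ hsplit ▸ htmem)
            simp [hp, ht] at this
          obtain ⟨v, l₂, hsufeq⟩ : ∃ v l₂, suf = v :: l₂ := by
            cases hsc : suf with
            | nil => exact (hsufne hsc).elim
            | cons v l₂ => exact ⟨v, l₂, rfl⟩
          have hv : P v = i := by
            have := List.head?_dropWhile_not p (m :: rest)
            rw [← hsuf, hsufeq] at this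
            simpa [hp] using this
          have hpreeq : pre = m :: (rest.takeWhile p) := by
            rw [hpre, List.takeWhile_cons_of_pos (by simp [hp, hm])]
          have hprene : pre ≠ [] := by rw [hpreeq]; simp
          -- the predecessor of v on the walk
          have hdecomp : a :: m :: rest = (a :: pre) ++ (v :: l₂) := by
            rw [← hsufeq, ← hsplit]; rfl
          have hcsplit := (List.isChain_append.mp (hdecomp ▸ hc))
          set u := pre.getLast hprene with hu
          have hulast : (a :: pre).getLast? = some u := by
            rw [List.getLast?_eq_getLast_of_ne_nil (by simp), List.getLast_cons hprene]
          have huadj : G.Adj u v := hcsplit.2.2 u (by rw [hulast]; rfl) v rfl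
          have humem : u ∈ pre := hu ▸ List.getLast_mem hprene
          have hui : P u ≠ i := by
            have := List.mem_takeWhile_imp (hpre ▸ humem)
            simpa [hp] using this
          have hvB : v ∈ bdryIn G P i := ⟨hv, u, G.symm huadj, hui⟩
          -- the prefix walk in G from a to v
          have hwalk1 : IsWalk G a v ((a :: pre) ++ [v]) := by
            refine ⟨?_, ?_, ?_⟩
            · show List.IsChain _ _
              rw [List.isChain_append]
              refine ⟨hcsplit.1, List.isChain_singleton v, fun x hx y hy => ?_⟩
              have : v = y := by simpa using hy
              subst this
              rw [hulast] at hx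
              have hxu : u = x := by simpa using hx
              exact hxu ▸ huadj
            · rw [List.cons_append]; rfl
            · exact List.getLast?_concat
          have hdistav : dist G a v ≤ wlen G ((a :: pre) ++ [v]) := dist_le_wlen G hwalk1
          -- shortcut edge in G'
          have hAdj' : G'.Adj a v := Or.inr ⟨hsB, hvB⟩
          have hw' : G'.w a v ≤ dist G a v := by
            show (if _ then _ else _) ≤ _
            split_ifs with h1 h2
            · exact min_le_left _ _
            · exact le_rfl
            · exact (h1 ⟨hsB, hvB⟩).elim
          -- the suffix walk
          have hwalk2 : IsWalk G v t (v :: l₂) := by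
            refine ⟨hcsplit.2.1, rfl, ?_⟩
            have : (m :: rest).getLast? = (v :: l₂).getLast? := by
              conv_lhs => rw [← hsplit, hsufeq]
              rw [List.getLast?_append]
              cases hgl : (v :: l₂).getLast? with
              | none => simp at hgl
              | some x => rfl
            rw [← this, hl2]
          have hlen3 : (v :: l₂).length ≤ n := by
            calc (v :: l₂).length = suf.length := by rw [hsufeq]
              _ ≤ (m :: rest).length := (List.dropWhile_sublist p).length_le
              _ ≤ n := hlen2
          calc dist G' a t ≤ dist G' a v + dist G' v t := dist_triangle G' a v t
            _ ≤ dist G a v + wlen G (v :: l₂) := by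
                refine add_le_add ((dist_le_w G' hAdj').trans hw') ?_
                exact ih v (v :: l₂) hlen3 hwalk2 hv
            _ ≤ wlen G ((a :: pre) ++ [v]) + wlen G (v :: l₂) :=
                add_le_add_left hdistav _
            _ = wlen G (a :: m :: rest) := by
                simp only [wlen]
                rw [← pairSum_append_cons G.w (a :: pre) v l₂, ← hdecomp]

/-- Pre-Boundary correctness: the partition graph augmented with
global boundary-pair distances answers every same-partition query exactly. -/
theorem stmt10 {V ι : Type*} (G : WGraph V) (P : V → ι) (i : ι) :
    ∀ s t : V, P s = i → P t = i →
      dist (augment G P i (dist G)) s t = dist G s t := by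
  intro s t hs ht
  refine le_antisymm ?_ ?_
  · rw [dist_eq_iInf G s t]
    exact le_iInf fun p => augment_dist_le G P i t ht p.1.length s p.1 le_rfl p.2 hs
  · refine dist_le_of_edge_le (fun u v h => ?_) s t
    rcases h with ⟨h', _, _⟩ | ⟨h1, h2⟩
    · show dist G u v ≤ (if _ then _ else _)
      split_ifs with hb hadj
      · exact le_min le_rfl (dist_le_w G h')
      · exact le_rfl
      · exact dist_le_w G h'
    · show dist G u v ≤ (if _ then _ else _)
      split_ifs with hb hadj
      · exact le_min le_rfl (dist_le_w G hadj.1)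
      · exact le_rfl
      · exact (hb ⟨h1, h2⟩).elim

end PSP
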